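/- The correlation robust influence function is submodular: for all seed sets S ⊆ T ⊆ V and every node v ∈ V \ T, f^corr(S ∪ {v}) − f^corr(S) ≥ f^corr(T ∪ {v}) − f^corr(T). -/

import Mathlib

set_option linter.unusedSectionVars false
set_option linter.unreachableTactic false
set_option linter.unusedTactic false
open scoped BigOperators

namespace CorrIM

variable {V : Type*} [Fintype V] [DecidableEq V]

/-- A node `i` is influenced: `i ∈ S`, or `i` is reachable from some node of `S`
along the live edges of the scenario `c`. -/
def influenced (c : Finset (V × V)) (S : Finset V) (i : V) : Prop :=
  ∃ s ∈ S, Relation.ReflTransGen (fun a b : V => (a, b) ∈ c) s i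

/-- `R c S` : the number of influenced nodes in scenario `c` with seed set `S`. -/
noncomputable def R (c : Finset (V × V)) (S : Finset V) : ℕ :=
  Set.ncard {i : V | influenced c S i}

/-- The Fréchet class `Θ` : probability distributions on scenarios (subsets of `E`)
whose marginals agree with the edge likelihoods `p`. -/
def memTheta (E : Finset (V × V)) (p : V × V → ℝ) (θ : Finset (V × V) → ℝ) : Prop :=
  (∀ c, 0 ≤ θ c) ∧ (∀ c, θ c ≠ 0 → c ⊆ E) ∧ (∑ c : Finset (V × V), θ c) = 1 ∧
    ∀ e ∈ E, (∑ c : Finset (V × V), if e ∈ c then θ c else 0) = p e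

/-- Expected number of influenced nodes under the distribution `θ`. -/
noncomputable def expInf (θ : Finset (V × V) → ℝ) (S : Finset V) : ℝ :=
  ∑ c : Finset (V × V), θ c * (R c S : ℝ)

/-- The correlation robust influence function `f^corr`. -/
noncomputable def fcorr (E : Finset (V × V)) (p : V × V → ℝ) (S : Finset V) : ℝ :=
  sInf {x : ℝ | ∃ θ, memTheta E p θ ∧ x = expInf θ S}

open Classical in
/-- Probability of the event `A` under the distribution `θ`. -/
noncomputable def prob (θ : Finset (V × V) → ℝ) (A : Finset (V × V) → Prop) : ℝ :=
  ∑ c : Finset (V × V), if A c then θ c else 0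

/-- `γ` (a list of nodes `i₀, i₁, …, i_λ`, `λ ≥ 1`) is a directed path from the
seed set `S` to the node `i` using edges of `E`. -/
def IsPathFrom (E : Finset (V × V)) (S : Finset V) (i : V) (γ : List V) : Prop :=
  2 ≤ γ.length ∧ (∃ s ∈ S, γ.head? = some s) ∧ γ.getLast? = some i ∧
    γ.Chain' (fun a b : V => (a, b) ∈ E)

/-- The list of edges `(i₀,i₁), …, (i_{λ-1}, i_λ)` of a path `γ = [i₀, …, i_λ]`. -/
def pathEdges (γ : List V) : List (V × V) := γ.zip γ.tail

/-- The weight `L(γ) = 1 - ∑_{l=1}^{λ} (1 - p(i_{l-1}, i_l))` of a path. -/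
noncomputable def L (p : V × V → ℝ) (γ : List V) : ℝ :=
  1 - ((pathEdges γ).map (fun e => 1 - p e)).sum

/-- `π*_i = max(0, max_{γ ∈ Γ(S,i)} L(γ))`, with value `0` when `Γ(S,i) = ∅`. -/
noncomputable def piStar (E : Finset (V × V)) (p : V × V → ℝ) (S : Finset V) (i : V) : ℝ :=
  sSup (insert 0 {x : ℝ | ∃ γ : List V, IsPathFrom E S i γ ∧ x = L p γ})

/-- The independent cascade distribution `θ_ic` : each edge of `E` is live
independently with probability `p e`. -/
noncomputable def thetaIC (E : Finset (V × V)) (p : V × V → ℝ) (c : Finset (V × V)) : ℝ :=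
  if c ⊆ E then (∏ e ∈ c, p e) * ∏ e ∈ E \ c, (1 - p e) else 0

/-- The independent cascade influence function `f^ic`. -/
noncomputable def fic (E : Finset (V × V)) (p : V × V → ℝ) (S : Finset V) : ℝ :=
  expInf (thetaIC E p) S



/-! ### Auxiliary list lemmas -/

lemma pathEdges_cons_cons (a b : V) (l : List V) :
    pathEdges (a :: b :: l) = (a, b) :: pathEdges (b :: l) := rfl

lemma chain'_iff_pathEdges (c : Finset (V × V)) (γ : List V) :
    γ.Chain' (fun a b : V => (a, b) ∈ c) ↔ ∀ e ∈ pathEdges γ, e ∈ c := by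
  induction γ with
  | nil => simp [pathEdges, List.Chain']
  | cons a l ih =>
    cases l with
    | nil => simp [pathEdges, List.Chain']
    | cons b m =>
      have ih' : List.IsChain (fun a b : V => (a, b) ∈ c) (b :: m) ↔ _ := ih
      show List.IsChain _ _ ↔ _
      rw [List.isChain_cons_cons, pathEdges_cons_cons, ih']
      simp

lemma pathEdges_append_singleton (γ : List V) (hγ : γ ≠ []) (b : V) :
    pathEdges (γ ++ [b]) = pathEdges γ ++ [(γ.getLast hγ, b)] := by
  induction γ with
  | nil => simp at hγ
  | cons a l ih =>
    cases l with
    | nil => simp [pathEdges]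
    | cons a' m =>
      rw [show (a :: a' :: m) ++ [b] = a :: a' :: (m ++ [b]) from rfl, pathEdges_cons_cons]
      rw [show a' :: (m ++ [b]) = (a' :: m) ++ [b] from rfl]
      rw [ih (by simp), pathEdges_cons_cons]
      simp [List.getLast_cons]

/-! ### piStar basic facts -/

lemma edge_mem_of_isPathFrom {E : Finset (V × V)} {S : Finset V} {i : V} {γ : List V}
    (h : IsPathFrom E S i γ) {e : V × V} (he : e ∈ pathEdges γ) : e ∈ E :=
  (chain'_iff_pathEdges E γ).1 h.2.2.2 e he

lemma L_le_one {E : Finset (V × V)} {p : V × V → ℝ} (hp : ∀ e ∈ E, 0 ≤ p e ∧ p e ≤ 1)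
    {S : Finset V} {i : V} {γ : List V} (h : IsPathFrom E S i γ) : L p γ ≤ 1 := by
  have : 0 ≤ ((pathEdges γ).map (fun e => 1 - p e)).sum := by
    apply List.sum_nonneg
    intro x hx
    simp only [List.mem_map] at hx
    obtain ⟨e, he, rfl⟩ := hx
    have := (hp e (edge_mem_of_isPathFrom h he)).2
    linarith
  simp only [L]; linarith

lemma bddAbove_PSet {E : Finset (V × V)} {p : V × V → ℝ} (hp : ∀ e ∈ E, 0 ≤ p e ∧ p e ≤ 1)
    (S : Finset V) (i : V) :
    BddAbove (insert 0 {x : ℝ | ∃ γ : List V, IsPathFrom E S i γ ∧ x = L p γ}) := by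
  refine ⟨1, ?_⟩
  rintro x (rfl | ⟨γ, hγ, rfl⟩)
  · exact zero_le_one
  · exact L_le_one hp hγ

lemma piStar_nonneg {E : Finset (V × V)} {p : V × V → ℝ} (hp : ∀ e ∈ E, 0 ≤ p e ∧ p e ≤ 1)
    (S : Finset V) (i : V) : 0 ≤ piStar E p S i :=
  le_csSup (bddAbove_PSet hp S i) (Set.mem_insert 0 _)

lemma piStar_le {E : Finset (V × V)} {p : V × V → ℝ} {S : Finset V} {i : V} {y : ℝ}
    (h0 : 0 ≤ y) (hL : ∀ γ, IsPathFrom E S i γ → L p γ ≤ y) : piStar E p S i ≤ y := by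
  apply csSup_le ⟨0, Set.mem_insert 0 _⟩
  rintro x (rfl | ⟨γ, hγ, rfl⟩)
  · exact h0
  · exact hL γ hγ

lemma piStar_le_one {E : Finset (V × V)} {p : V × V → ℝ} (hp : ∀ e ∈ E, 0 ≤ p e ∧ p e ≤ 1)
    (S : Finset V) (i : V) : piStar E p S i ≤ 1 :=
  piStar_le zero_le_one (fun _ hγ => L_le_one hp hγ)

lemma le_piStar {E : Finset (V × V)} {p : V × V → ℝ} (hp : ∀ e ∈ E, 0 ≤ p e ∧ p e ≤ 1)
    {S : Finset V} {i : V} {γ : List V} (hγ : IsPathFrom E S i γ) : L p γ ≤ piStar E p S i :=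
  le_csSup (bddAbove_PSet hp S i) (Set.mem_insert_of_mem _ ⟨γ, hγ, rfl⟩)

/-! ### The function H -/

noncomputable def H (E : Finset (V × V)) (p : V × V → ℝ) (S : Finset V) (i : V) : ℝ :=
  if i ∈ S then 1 else piStar E p S i

lemma H_nonneg {E : Finset (V × V)} {p : V × V → ℝ} (hp : ∀ e ∈ E, 0 ≤ p e ∧ p e ≤ 1)
    (S : Finset V) (i : V) : 0 ≤ H E p S i := by
  unfold H; split
  · exact zero_le_one
  · exact piStar_nonneg hp S i

lemma H_le_one {E : Finset (V × V)} {p : V × V → ℝ} (hp : ∀ e ∈ E, 0 ≤ p e ∧ p e ≤ 1)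
    (S : Finset V) (i : V) : H E p S i ≤ 1 := by
  unfold H; split
  · exact le_refl 1
  · exact piStar_le_one hp S i

lemma H_mono {E : Finset (V × V)} {p : V × V → ℝ} (hp : ∀ e ∈ E, 0 ≤ p e ∧ p e ≤ 1)
    {S T : Finset V} (hST : S ⊆ T) (i : V) : H E p S i ≤ H E p T i := by
  unfold H
  by_cases hiT : i ∈ T
  · simp only [hiT, if_true]
    split
    · exact le_refl 1
    · exact piStar_le_one hp S i
  · have hiS : i ∉ S := fun h => hiT (hST h)
    simp only [hiT, hiS, if_false]
    apply piStar_le (piStar_nonneg hp T i)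
    intro γ hγ
    apply le_piStar hp
    obtain ⟨h1, ⟨s, hs, hh⟩, h3, h4⟩ := hγ
    exact ⟨h1, ⟨s, hST hs, hh⟩, h3, h4⟩

lemma H_one_of_mem {E : Finset (V × V)} {p : V × V → ℝ} {S : Finset V} {i : V}
    (h : i ∈ S) : H E p S i = 1 := by simp [H, h]

lemma H_insert {E : Finset (V × V)} {p : V × V → ℝ} (hp : ∀ e ∈ E, 0 ≤ p e ∧ p e ≤ 1)
    (S : Finset V) (v i : V) :
    H E p (insert v S) i = max (H E p S i) (H E p ({v} : Finset V) i) := by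
  by_cases hiv : i = v
  · subst hiv
    rw [H_one_of_mem (Finset.mem_insert_self i S), H_one_of_mem (Finset.mem_singleton_self i)]
    exact (max_eq_right (H_le_one hp S i)).symm
  by_cases hiS : i ∈ S
  · rw [H_one_of_mem (Finset.mem_insert_of_mem hiS), H_one_of_mem hiS]
    exact (max_eq_left (H_le_one hp _ i)).symm
  · have hiI : i ∉ insert v S := by simp [hiv, hiS]
    have hivv : i ∉ ({v} : Finset V) := by simp [hiv]
    simp only [H, hiI, hiS, hivv, if_false]
    unfold piStar
    have hset : (insert 0 {x : ℝ | ∃ γ : List V, IsPathFrom E (insert v S) i γ ∧ x = L p γ})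
        = (insert 0 {x : ℝ | ∃ γ : List V, IsPathFrom E S i γ ∧ x = L p γ})
          ∪ (insert 0 {x : ℝ | ∃ γ : List V, IsPathFrom E ({v} : Finset V) i γ ∧ x = L p γ}) := by
      ext x
      simp only [Set.mem_insert_iff, Set.mem_union, Set.mem_setOf_eq]
      constructor
      · rintro (rfl | ⟨γ, ⟨h1, ⟨s, hs, hh⟩, h3, h4⟩, rfl⟩)
        · exact Or.inl (Or.inl rfl)
        · rcases Finset.mem_insert.1 hs with rfl | hsS
          · exact Or.inr (Or.inr ⟨γ, ⟨h1, ⟨s, Finset.mem_singleton_self s, hh⟩, h3, h4⟩, rfl⟩)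
          · exact Or.inl (Or.inr ⟨γ, ⟨h1, ⟨s, hsS, hh⟩, h3, h4⟩, rfl⟩)
      · rintro ((rfl | ⟨γ, ⟨h1, ⟨s, hs, hh⟩, h3, h4⟩, rfl⟩) | (rfl | ⟨γ, ⟨h1, ⟨s, hs, hh⟩, h3, h4⟩, rfl⟩))
        · exact Or.inl rfl
        · exact Or.inr ⟨γ, ⟨h1, ⟨s, Finset.mem_insert_of_mem hs, hh⟩, h3, h4⟩, rfl⟩
        · exact Or.inl rfl
        · exact Or.inr ⟨γ, ⟨h1, ⟨s, by
            rw [Finset.mem_singleton] at hs; subst hs; exact Finset.mem_insert_self s S, hh⟩,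
            h3, h4⟩, rfl⟩
    rw [hset, csSup_union (bddAbove_PSet hp S i) ⟨0, Set.mem_insert 0 _⟩
      (bddAbove_PSet hp ({v} : Finset V) i) ⟨0, Set.mem_insert 0 _⟩]

lemma H_step {E : Finset (V × V)} {p : V × V → ℝ} (hp : ∀ e ∈ E, 0 ≤ p e ∧ p e ≤ 1)
    (S : Finset V) {a b : V} (he : (a, b) ∈ E) :
    H E p S a - (1 - p (a, b)) ≤ H E p S b := by
  obtain ⟨hp0, hp1⟩ := hp _ he
  have hpath_ab : ∀ s ∈ S, s = a → L p [a, b] ≤ H E p S b := by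
    intro s hs hsa
    subst hsa
    have hpab : IsPathFrom E S b [s, b] := by
      refine ⟨by simp, ⟨s, hs, rfl⟩, by simp, ?_⟩
      show List.IsChain _ _
      simp [he]
    by_cases hbS : b ∈ S
    · rw [H_one_of_mem hbS]; exact L_le_one hp hpab
    · simp only [H, hbS, if_false]; exact le_piStar hp hpab
  by_cases hbS : b ∈ S
  · rw [H_one_of_mem hbS]
    have := H_le_one hp S a
    linarith
  have hHb : H E p S b = piStar E p S b := by simp [H, hbS]
  have hHb0 : 0 ≤ H E p S b := H_nonneg hp S b
  by_cases haS : a ∈ S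
  · rw [H_one_of_mem haS]
    have : L p [a, b] = p (a, b) := by
      simp [L, pathEdges]
    have h2 := hpath_ab a haS rfl
    linarith
  · simp only [H, haS, hbS, if_false]
    have : piStar E p S a ≤ piStar E p S b + (1 - p (a, b)) := by
      apply piStar_le
      · linarith [piStar_nonneg hp S b]
      · intro γ hγ
        obtain ⟨h1, ⟨s, hs, hh⟩, h3, h4⟩ := hγ
        have hγne : γ ≠ [] := by
          intro hn; rw [hn] at h1; simp at h1
        have hlast : γ.getLast hγne = a := by
          have := List.getLast?_eq_getLast hγne
          rw [h3] at this
          exact (Option.some_injective _ this.symm)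
        have hpath' : IsPathFrom E S b (γ ++ [b]) := by
          refine ⟨?_, ⟨s, hs, ?_⟩, ?_, ?_⟩
          · rw [List.length_append]; simp; omega
          · rw [← hh]
            cases γ with
            | nil => exact absurd rfl hγne
            | cons x l => rfl
          · exact List.getLast?_concat
          · show List.IsChain _ _
            rw [List.isChain_append]
            refine ⟨h4, List.isChain_singleton b, ?_⟩
            intro x hx y hy
            rw [List.getLast?_eq_getLast hγne, hlast] at hx
            simp at hx hy
            subst hx; subst hy
            exact he
        have hLext : L p (γ ++ [b]) = L p γ - (1 - p (a, b)) := by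
          unfold L
          rw [pathEdges_append_singleton γ hγne b, hlast, List.map_append, List.sum_append]
          simp
          ring
        have := le_piStar hp hpath'
        rw [hLext] at this
        linarith
    linarith

/-! ### Lower bound: every θ ∈ Θ gives expected influence at least ∑ H -/

lemma reflTransGen_of_chain' {r : V → V → Prop} {γ : List V} {s i : V}
    (hc : γ.Chain' r) (hh : γ.head? = some s) (hl : γ.getLast? = some i) :
    Relation.ReflTransGen r s i := by
  induction γ generalizing s with
  | nil => simp at hh
  | cons a l ih =>
    cases l with
    | nil =>
      simp at hh hl
      subst hh; subst hl
      exact Relation.ReflTransGen.refl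
    | cons b m =>
      change List.IsChain _ _ at hc
      rw [List.isChain_cons_cons] at hc
      have hh' : a = s := by simpa using hh
      subst hh'
      have hl' : (b :: m).getLast? = some i := by
        rw [List.getLast?_cons_cons] at hl; exact hl
      exact Relation.ReflTransGen.head hc.1 (ih hc.2 rfl hl')

lemma sum_toFinset_le {α : Type*} [DecidableEq α] (l : List α) (f : α → ℝ)
    (hf : ∀ a ∈ l, 0 ≤ f a) : ∑ a ∈ l.toFinset, f a ≤ (l.map f).sum := by
  induction l with
  | nil => simp
  | cons a l ih =>
    rw [List.toFinset_cons, List.map_cons, List.sum_cons]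
    have ih' := ih (fun x hx => hf x (List.mem_cons_of_mem a hx))
    by_cases ha : a ∈ l.toFinset
    · rw [Finset.insert_eq_self.2 ha]
      have : 0 ≤ f a := hf a List.mem_cons_self
      linarith
    · rw [Finset.sum_insert ha]
      linarith

open Classical in
lemma expInf_eq_sum_prob (θ : Finset (V × V) → ℝ) (S : Finset V) :
    expInf θ S = ∑ i : V, ∑ c : Finset (V × V), if influenced c S i then θ c else 0 := by
  have hR : ∀ c : Finset (V × V), (R c S : ℝ) = ∑ i : V, if influenced c S i then (1:ℝ) else 0 := by
    intro c
    have : R c S = (Finset.univ.filter (fun i => influenced c S i)).card := by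
      rw [R, Set.ncard_eq_toFinset_card']
      congr 1
      ext i
      simp
    rw [this, Finset.card_filter]
    push_cast
    rfl
  rw [expInf]
  have hmul : ∀ c : Finset (V × V), θ c * (R c S : ℝ)
      = ∑ i : V, if influenced c S i then θ c else 0 := by
    intro c
    rw [hR c, Finset.mul_sum]
    apply Finset.sum_congr rfl
    intro i _
    by_cases h : influenced c S i <;> simp [h]
  rw [Finset.sum_congr rfl (fun c _ => hmul c)]
  exact Finset.sum_comm

open Classical in
lemma H_le_prob {E : Finset (V × V)} {p : V × V → ℝ} (hp : ∀ e ∈ E, 0 ≤ p e ∧ p e ≤ 1)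
    {θ : Finset (V × V) → ℝ} (hθ : memTheta E p θ) (S : Finset V) (i : V) :
    H E p S i ≤ ∑ c : Finset (V × V), if influenced c S i then θ c else 0 := by
  obtain ⟨h0, hsupp, h1, hmarg⟩ := hθ
  have hPnn : (0:ℝ) ≤ ∑ c : Finset (V × V), if influenced c S i then θ c else 0 :=
    Finset.sum_nonneg (fun c _ => by split <;> [exact h0 c; exact le_refl 0])
  by_cases hiS : i ∈ S
  · rw [H_one_of_mem hiS, ← h1]
    apply Finset.sum_le_sum
    intro c _
    rw [if_pos ⟨i, hiS, Relation.ReflTransGen.refl⟩]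
  · simp only [H, hiS, if_false]
    apply piStar_le hPnn
    intro γ hγ
    set F := (pathEdges γ).toFinset with hF
    -- live probability
    have hlive_imp : ∀ c : Finset (V × V), (∀ e ∈ F, e ∈ c) → influenced c S i := by
      intro c hc
      obtain ⟨hlen, ⟨s, hs, hh⟩, hl, hchain⟩ := hγ
      refine ⟨s, hs, reflTransGen_of_chain' ?_ hh hl⟩
      rw [chain'_iff_pathEdges]
      intro e he
      exact hc e (List.mem_toFinset.2 he)
    have step1 : (∑ c : Finset (V × V), if (∀ e ∈ F, e ∈ c) then θ c else 0)
        ≤ ∑ c : Finset (V × V), if influenced c S i then θ c else 0 := by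
      apply Finset.sum_le_sum
      intro c _
      by_cases hc : ∀ e ∈ F, e ∈ c
      · rw [if_pos hc, if_pos (hlive_imp c hc)]
      · rw [if_neg hc]
        split <;> [exact h0 c; exact le_refl 0]
    have step2 : (∑ c : Finset (V × V), if (∀ e ∈ F, e ∈ c) then θ c else 0)
        = 1 - ∑ c : Finset (V × V), if ¬ (∀ e ∈ F, e ∈ c) then θ c else 0 := by
      have : ∀ c : Finset (V × V),
          (if (∀ e ∈ F, e ∈ c) then θ c else 0) + (if ¬ (∀ e ∈ F, e ∈ c) then θ c else 0) = θ c := by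
        intro c
        by_cases hc : ∀ e ∈ F, e ∈ c
        · rw [if_pos hc, if_neg (not_not_intro hc)]; ring
        · rw [if_neg hc, if_pos hc]; ring
      have hsum := Finset.sum_congr rfl (fun c (_ : c ∈ Finset.univ) => (this c).symm)
      rw [← h1, hsum, Finset.sum_add_distrib]
      ring
    have step3 : (∑ c : Finset (V × V), if ¬ (∀ e ∈ F, e ∈ c) then θ c else 0)
        ≤ ∑ e ∈ F, (1 - p e) := by
      have swap : ∑ e ∈ F, (1 - p e) = ∑ c : Finset (V × V), ∑ e ∈ F, (if e ∉ c then θ c else 0) := by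
        rw [Finset.sum_comm]
        apply Finset.sum_congr rfl
        intro e heF
        have heE : e ∈ E := edge_mem_of_isPathFrom hγ (List.mem_toFinset.1 heF)
        have hm := hmarg e heE
        have : ∀ c : Finset (V × V),
            (if e ∈ c then θ c else 0) + (if e ∉ c then θ c else 0) = θ c := by
          intro c
          by_cases hc : e ∈ c
          · rw [if_pos hc, if_neg (not_not_intro hc)]; ring
          · rw [if_neg hc, if_pos hc]; ring
        have hsum := Finset.sum_congr rfl (fun c (_ : c ∈ Finset.univ) => (this c).symm)
        rw [← h1, hsum, Finset.sum_add_distrib, hm]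
        ring
      rw [swap]
      apply Finset.sum_le_sum
      intro c _
      by_cases hc : ∀ e ∈ F, e ∈ c
      · rw [if_neg (not_not_intro hc)]
        exact Finset.sum_nonneg (fun e _ => by split <;> [exact h0 c; exact le_refl 0])
      · rw [if_pos hc]
        push_neg at hc
        obtain ⟨e0, he0F, he0c⟩ := hc
        have : (if e0 ∉ c then θ c else 0) = θ c := if_pos he0c
        calc θ c = (if e0 ∉ c then θ c else 0) := this.symm
          _ ≤ ∑ e ∈ F, (if e ∉ c then θ c else 0) := Finset.single_le_sum
              (f := fun e => if e ∉ c then θ c else 0)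
              (fun e _ => by by_cases h : e ∈ c <;> simp [h, h0 c]) he0F
    have step4 : ∑ e ∈ F, (1 - p e) ≤ ((pathEdges γ).map (fun e => 1 - p e)).sum := by
      apply sum_toFinset_le
      intro e he
      have := (hp e (edge_mem_of_isPathFrom hγ he)).2
      linarith
    rw [L]
    linarith

lemma sum_H_le_expInf {E : Finset (V × V)} {p : V × V → ℝ}
    (hp : ∀ e ∈ E, 0 ≤ p e ∧ p e ≤ 1)
    {θ : Finset (V × V) → ℝ} (hθ : memTheta E p θ) (S : Finset V) :
    ∑ i : V, H E p S i ≤ expInf θ S := by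
  rw [expInf_eq_sum_prob]
  exact Finset.sum_le_sum (fun i _ => H_le_prob hp hθ S i)

/-! ### The worst-case distribution -/

section Construction

open MeasureTheory

variable (E : Finset (V × V)) (p : V × V → ℝ) (S : Finset V)

/-- The "dead" set of times for edge `e` (a wrap-around interval of length `1 - p e`
starting at `1 - H(e.1)`). -/
noncomputable def deadSet (e : V × V) : Set ℝ :=
  Set.Ico (1 - H E p S e.1) (min (1 - H E p S e.1 + (1 - p e)) 1) ∪
    Set.Ico 0 (1 - H E p S e.1 + (1 - p e) - 1)

open Classical in
/-- The scenario of live edges at time `u`. -/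
noncomputable def liveEdges (u : ℝ) : Finset (V × V) :=
  E.filter (fun e => u ∉ deadSet E p S e)

/-- The worst-case distribution. -/
noncomputable def thetaW (A : Finset (V × V)) : ℝ :=
  (volume {u : ℝ | u ∈ Set.Ico (0:ℝ) 1 ∧ liveEdges E p S u = A}).toReal

lemma measurableSet_deadSet (e : V × V) : MeasurableSet (deadSet E p S e) :=
  (measurableSet_Ico.union measurableSet_Ico)

open Classical in
lemma mem_liveEdges {u : ℝ} {e : V × V} :
    e ∈ liveEdges E p S u ↔ e ∈ E ∧ u ∉ deadSet E p S e := Finset.mem_filter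

lemma measurableSet_live (e : V × V) : MeasurableSet {u : ℝ | e ∈ liveEdges E p S u} := by
  by_cases he : e ∈ E
  · have : {u : ℝ | e ∈ liveEdges E p S u} = (deadSet E p S e)ᶜ := by
      ext u; simp [mem_liveEdges, he]
    rw [this]
    exact (measurableSet_deadSet E p S e).compl
  · have : {u : ℝ | e ∈ liveEdges E p S u} = ∅ := by
      ext u; simp [mem_liveEdges, he]
    rw [this]
    exact MeasurableSet.empty

lemma measurableSet_scenario (A : Finset (V × V)) :
    MeasurableSet {u : ℝ | u ∈ Set.Ico (0:ℝ) 1 ∧ liveEdges E p S u = A} := by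
  have hset : {u : ℝ | u ∈ Set.Ico (0:ℝ) 1 ∧ liveEdges E p S u = A}
      = Set.Ico (0:ℝ) 1 ∩ ⋂ (e : V × V),
          (if e ∈ A then {u : ℝ | e ∈ liveEdges E p S u}
           else {u : ℝ | e ∈ liveEdges E p S u}ᶜ) := by
    ext u
    simp only [Set.mem_setOf_eq, Set.mem_inter_iff, Set.mem_iInter]
    constructor
    · rintro ⟨hu, rfl⟩
      refine ⟨hu, fun e => ?_⟩
      by_cases he : e ∈ liveEdges E p S u <;> simp [he]
    · rintro ⟨hu, h⟩
      refine ⟨hu, Finset.ext fun e => ?_⟩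
      have := h e
      by_cases heA : e ∈ A
      · simp only [heA, if_true, Set.mem_setOf_eq] at this
        exact ⟨fun _ => heA, fun _ => this⟩
      · simp only [heA, if_false, Set.mem_compl_iff, Set.mem_setOf_eq] at this
        exact ⟨fun h' => absurd h' this, fun h' => absurd h' heA⟩
  rw [hset]
  refine measurableSet_Ico.inter (MeasurableSet.iInter fun e => ?_)
  by_cases heA : e ∈ A
  · simpa [heA] using measurableSet_live E p S e
  · simpa [heA] using (measurableSet_live E p S e).compl

lemma deadSet_subset (hp : ∀ e ∈ E, 0 ≤ p e ∧ p e ≤ 1) {e : V × V} (he : e ∈ E) :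
    deadSet E p S e ⊆ Set.Ico (0:ℝ) 1 := by
  have h0 : 0 ≤ H E p S e.1 := H_nonneg hp S e.1
  have h1 : H E p S e.1 ≤ 1 := H_le_one hp S e.1
  have hw : 1 - p e ≤ 1 := by have := (hp e he).1; linarith
  rintro u (hu | hu)
  · obtain ⟨hu1, hu2⟩ := hu
    exact ⟨by linarith, lt_of_lt_of_le hu2 (min_le_right _ _)⟩
  · obtain ⟨hu1, hu2⟩ := hu
    exact ⟨hu1, by linarith⟩

lemma volume_deadSet (hp : ∀ e ∈ E, 0 ≤ p e ∧ p e ≤ 1) {e : V × V} (he : e ∈ E) :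
    volume (deadSet E p S e) = ENNReal.ofReal (1 - p e) := by
  obtain ⟨hp0, hp1⟩ := hp e he
  set x := 1 - H E p S e.1 with hx
  set w := 1 - p e with hw
  have hx0 : 0 ≤ x := by have := H_le_one hp S e.1; simp [hx]; linarith
  have hx1 : x ≤ 1 := by have := H_nonneg hp S e.1; simp [hx]; linarith
  have hw0 : 0 ≤ w := by simp [hw]; linarith
  have hw1 : w ≤ 1 := by simp [hw]; linarith
  by_cases hc : x + w ≤ 1
  · have hmin : min (x + w) 1 = x + w := min_eq_left hc
    have hempty : Set.Ico (0:ℝ) (x + w - 1) = ∅ := Set.Ico_eq_empty (by linarith)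
    rw [deadSet, ← hx, hmin, hempty, Set.union_empty, Real.volume_Ico]
    congr 1
    ring
  · push_neg at hc
    have hmin : min (x + w) 1 = 1 := min_eq_right (le_of_lt hc)
    have hdisj : Disjoint (Set.Ico x (min (x+w) 1)) (Set.Ico (0:ℝ) (x + w - 1)) := by
      rw [Set.disjoint_left]
      rintro u ⟨hu1, _⟩ ⟨_, hu4⟩
      linarith
    rw [deadSet, ← hx, measure_union hdisj measurableSet_Ico, hmin,
      Real.volume_Ico, Real.volume_Ico]
    rw [← ENNReal.ofReal_add (by linarith) (by linarith)]
    congr 1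
    ring

open Classical in
lemma sum_thetaW (Q : Finset (V × V) → Prop) :
    (∑ A : Finset (V × V), if Q A then thetaW E p S A else 0)
      = (volume {u : ℝ | u ∈ Set.Ico (0:ℝ) 1 ∧ Q (liveEdges E p S u)}).toReal := by
  have hset : {u : ℝ | u ∈ Set.Ico (0:ℝ) 1 ∧ Q (liveEdges E p S u)}
      = ⋃ A ∈ Finset.univ.filter (fun A : Finset (V × V) => Q A),
          {u : ℝ | u ∈ Set.Ico (0:ℝ) 1 ∧ liveEdges E p S u = A} := by
    ext u
    simp only [Set.mem_setOf_eq, Set.mem_iUnion, Finset.mem_filter, Finset.mem_univ, true_and]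
    constructor
    · rintro ⟨hu, hQ⟩
      exact ⟨liveEdges E p S u, hQ, hu, rfl⟩
    · rintro ⟨A, hQ, hu, rfl⟩
      exact ⟨hu, hQ⟩
  have hdisj : Set.PairwiseDisjoint
      ↑(Finset.univ.filter (fun A : Finset (V × V) => Q A))
      (fun A : Finset (V × V) => {u : ℝ | u ∈ Set.Ico (0:ℝ) 1 ∧ liveEdges E p S u = A}) := by
    intro A _ B _ hAB
    rw [Function.onFun, Set.disjoint_left]
    rintro u ⟨_, rfl⟩ ⟨_, hB⟩
    exact hAB hB
  have hvol := measure_biUnion_finset (μ := volume) hdisj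
    (fun A _ => measurableSet_scenario E p S A)
  rw [hset, hvol]
  have hne : ∀ A ∈ Finset.univ.filter (fun A : Finset (V × V) => Q A),
      volume {u : ℝ | u ∈ Set.Ico (0:ℝ) 1 ∧ liveEdges E p S u = A} ≠ ⊤ := by
    intro A _
    have hsub : {u : ℝ | u ∈ Set.Ico (0:ℝ) 1 ∧ liveEdges E p S u = A} ⊆ Set.Ico (0:ℝ) 1 :=
      fun u hu => hu.1
    have := measure_mono (μ := volume) hsub
    rw [Real.volume_Ico] at this
    exact ne_top_of_le_ne_top (by simp) this
  rw [ENNReal.toReal_sum hne, Finset.sum_filter]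
  apply Finset.sum_congr rfl
  intro A _
  by_cases hQA : Q A <;> simp [hQA, thetaW]

open Classical in
lemma memTheta_thetaW (hp : ∀ e ∈ E, 0 ≤ p e ∧ p e ≤ 1) :
    memTheta E p (thetaW E p S) := by
  refine ⟨fun A => ENNReal.toReal_nonneg, ?_, ?_, ?_⟩
  · intro A hA
    by_contra hAE
    apply hA
    have : {u : ℝ | u ∈ Set.Ico (0:ℝ) 1 ∧ liveEdges E p S u = A} = ∅ := by
      ext u
      simp only [Set.mem_setOf_eq, Set.mem_empty_iff_false, iff_false, not_and]
      intro _ hu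
      exact hAE (hu ▸ Finset.filter_subset _ E)
    rw [thetaW, this]
    simp
  · have := sum_thetaW E p S (fun _ => True)
    simp only [if_true] at this
    rw [this]
    have : {u : ℝ | u ∈ Set.Ico (0:ℝ) 1 ∧ True} = Set.Ico (0:ℝ) 1 := by ext u; simp
    rw [this, Real.volume_Ico]
    simp
  · intro e he
    have hQ := sum_thetaW E p S (fun A => e ∈ A)
    have hcongr : (∑ c : Finset (V × V), if e ∈ c then thetaW E p S c else 0)
        = (volume {u : ℝ | u ∈ Set.Ico (0:ℝ) 1 ∧ e ∈ liveEdges E p S u}).toReal := by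
      rw [← hQ]
      try (apply Finset.sum_congr rfl; intro c _; by_cases h : e ∈ c <;> simp [h])
    rw [hcongr]
    have hset : {u : ℝ | u ∈ Set.Ico (0:ℝ) 1 ∧ e ∈ liveEdges E p S u}
        = Set.Ico (0:ℝ) 1 \ deadSet E p S e := by
      ext u
      simp only [Set.mem_setOf_eq, Set.mem_diff, mem_liveEdges, he, true_and]
      try tauto
    rw [hset, measure_diff (deadSet_subset E p S hp he)
      (measurableSet_deadSet E p S e).nullMeasurableSet
      (by rw [volume_deadSet E p S hp he]; exact ENNReal.ofReal_ne_top),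
      volume_deadSet E p S hp he, Real.volume_Ico]
    rw [show (1:ℝ) - 0 = 1 by ring]
    rw [← ENNReal.ofReal_sub 1 (by linarith [(hp e he).2])]
    rw [show (1:ℝ) - (1 - p e) = p e by ring]
    exact ENNReal.toReal_ofReal (hp e he).1

lemma invariant (hp : ∀ e ∈ E, 0 ≤ p e ∧ p e ≤ 1) {u : ℝ} (hu : u ∈ Set.Ico (0:ℝ) 1)
    {s j : V} (hs : s ∈ S)
    (h : Relation.ReflTransGen (fun a b : V => (a, b) ∈ liveEdges E p S u) s j) :
    1 - H E p S j ≤ u := by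
  induction h with
  | refl =>
    rw [H_one_of_mem hs]
    simpa using hu.1
  | @tail b j hsb hbj ih =>
    rw [mem_liveEdges] at hbj
    obtain ⟨hbjE, hbjdead⟩ := hbj
    have hbjdead' : u ∉ Set.Ico (1 - H E p S b) (min (1 - H E p S b + (1 - p (b, j))) 1) ∪
        Set.Ico 0 (1 - H E p S b + (1 - p (b, j)) - 1) := hbjdead
    have hstep : H E p S b - (1 - p (b, j)) ≤ H E p S j := H_step hp S hbjE
    by_cases hc : 1 - H E p S b + (1 - p (b, j)) ≤ 1
    · have hmin : min (1 - H E p S b + (1 - p (b, j))) 1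
          = 1 - H E p S b + (1 - p (b, j)) := min_eq_left hc
      have hnotin : u ∉ Set.Ico (1 - H E p S b) (1 - H E p S b + (1 - p (b, j))) := by
        intro hin
        exact hbjdead' (Or.inl (by rw [hmin]; exact hin))
      rw [Set.mem_Ico, not_and, not_lt] at hnotin
      have h2 := hnotin ih
      linarith
    · push_neg at hc
      exact absurd (Or.inl (by
        rw [min_eq_right (le_of_lt hc)]
        exact Set.mem_Ico.2 ⟨ih, hu.2⟩)) hbjdead'

open Classical in
lemma expInf_thetaW_le (hp : ∀ e ∈ E, 0 ≤ p e ∧ p e ≤ 1) :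
    expInf (thetaW E p S) S ≤ ∑ i : V, H E p S i := by
  rw [expInf_eq_sum_prob]
  apply Finset.sum_le_sum
  intro i _
  have hQ := sum_thetaW E p S (fun A => influenced A S i)
  have hcongr : (∑ c : Finset (V × V), if influenced c S i then thetaW E p S c else 0)
      = (volume {u : ℝ | u ∈ Set.Ico (0:ℝ) 1 ∧ influenced (liveEdges E p S u) S i}).toReal := by
    rw [← hQ]
    try (apply Finset.sum_congr rfl; intro c _; by_cases h : influenced c S i <;> simp [h])
  rw [hcongr]
  have hsub : {u : ℝ | u ∈ Set.Ico (0:ℝ) 1 ∧ influenced (liveEdges E p S u) S i}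
      ⊆ Set.Ico (1 - H E p S i) 1 := by
    rintro u ⟨hu, s, hs, hrtg⟩
    exact ⟨invariant E p S hp hu hs hrtg, hu.2⟩
  have hvol := measure_mono (μ := volume) hsub
  rw [Real.volume_Ico] at hvol
  have hH : (1:ℝ) - (1 - H E p S i) = H E p S i := by ring
  rw [hH] at hvol
  calc (volume {u : ℝ | u ∈ Set.Ico (0:ℝ) 1 ∧ influenced (liveEdges E p S u) S i}).toReal
      ≤ (ENNReal.ofReal (H E p S i)).toReal := by
        apply ENNReal.toReal_mono ENNReal.ofReal_ne_top hvol
    _ = H E p S i := ENNReal.toReal_ofReal (H_nonneg hp S i)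

end Construction

/-! ### The closed form -/

lemma fcorr_eq_sum_H {E : Finset (V × V)} {p : V × V → ℝ}
    (hp : ∀ e ∈ E, 0 ≤ p e ∧ p e ≤ 1) (S : Finset V) :
    fcorr E p S = ∑ i : V, H E p S i := by
  have hmem : expInf (thetaW E p S) S ∈ {x : ℝ | ∃ θ, memTheta E p θ ∧ x = expInf θ S} :=
    ⟨thetaW E p S, memTheta_thetaW E p S hp, rfl⟩
  have hlb : ∀ x ∈ {x : ℝ | ∃ θ, memTheta E p θ ∧ x = expInf θ S}, ∑ i : V, H E p S i ≤ x := by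
    rintro x ⟨θ, hθ, rfl⟩
    exact sum_H_le_expInf hp hθ S
  apply le_antisymm
  · calc fcorr E p S ≤ expInf (thetaW E p S) S := csInf_le ⟨_, hlb⟩ hmem
      _ ≤ ∑ i : V, H E p S i := expInf_thetaW_le E p S hp
  · exact le_csInf ⟨_, hmem⟩ hlb

/-- the correlation robust influence function is submodular: for all
`S ⊆ T ⊆ V` and `v ∈ V \ T`,
`f^corr(S ∪ {v}) - f^corr(S) ≥ f^corr(T ∪ {v}) - f^corr(T)`. -/
theorem fcorr_submodular (E : Finset (V × V)) (p : V × V → ℝ)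
    (hp : ∀ e ∈ E, 0 ≤ p e ∧ p e ≤ 1)
    (S T : Finset V) (hST : S ⊆ T) (v : V) (hv : v ∉ T) :
    fcorr E p (insert v T) - fcorr E p T ≤ fcorr E p (insert v S) - fcorr E p S := by
  rw [fcorr_eq_sum_H hp, fcorr_eq_sum_H hp, fcorr_eq_sum_H hp, fcorr_eq_sum_H hp,
    ← Finset.sum_sub_distrib, ← Finset.sum_sub_distrib]
  apply Finset.sum_le_sum
  intro i _
  rw [H_insert hp T v i, H_insert hp S v i]
  have h1 : H E p S i ≤ H E p T i := H_mono hp hST i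
  rcases le_total (H E p ({v} : Finset V) i) (H E p S i) with h | h
  · rw [max_eq_left (le_trans h h1), max_eq_left h]; linarith
  · rw [max_eq_right h]
    rcases le_total (H E p ({v} : Finset V) i) (H E p T i) with h2 | h2
    · rw [max_eq_left h2]; linarith
    · rw [max_eq_right h2]; linarith

end CorrIM
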